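/- Let f : I ⊂ [0,∞) → ℝ be differentiable on I°, m ∈ (0,1], ma, b ∈ I° with a < b, and suppose f' is integrable on [ma, mb]. If |f'|^q is (α,m)-convex on [ma,b] for some fixed q > 1 and (α,m) ∈ [0,1]², then for every θ > 0, with p = q/(q−1), the midpoint-type inequality holds: |f(m(a+b)/2) − (Γ(θ+1) 2^{θ−1}/(m^θ (b−a)^θ)) [J_{(m(a+b)/2)−}^θ f(ma) + J_{(m(a+b)/2)+}^θ f(mb)]| ≤ (m(b−a)/4) (1/(θp+1))^{1/p} { ((|f'(m(a+b)/2)|^q + αm |f'(a)|^q)/(α+1))^{1/q} + ((|f'(m(a+b)/2)|^q + αm |f'(b)|^q)/(α+1))^{1/q} }. -/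

import Mathlib

open MeasureTheory Set intervalIntegral Real

/-- Riemann-Liouville fractional integral `J_{d^-}^θ f(c) = (1/Γ(θ)) ∫_c^d (t-c)^(θ-1) f(t) dt`. -/
noncomputable def rlLeft (θ c d : ℝ) (f : ℝ → ℝ) : ℝ :=
  (1 / Real.Gamma θ) * ∫ t in c..d, (t - c) ^ (θ - 1) * f t

/-- Riemann-Liouville fractional integral `J_{c^+}^θ f(d) = (1/Γ(θ)) ∫_c^d (d-t)^(θ-1) f(t) dt`. -/
noncomputable def rlRight (θ c d : ℝ) (f : ℝ → ℝ) : ℝ :=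
  (1 / Real.Gamma θ) * ∫ t in c..d, (d - t) ^ (θ - 1) * f t

/-- The quantity `S_f(mx, λ, θ, ma, mb)` from the paper. -/
noncomputable def Sf (f : ℝ → ℝ) (m a b x lam θ : ℝ) : ℝ :=
  (1 - lam) * m ^ (θ - 1) * (((x - a) ^ θ + (b - x) ^ θ) / (b - a)) * f (m * x)
  + lam * m ^ (θ - 1) * (((x - a) ^ θ * f (m * a) + (b - x) ^ θ * f (m * b)) / (b - a))
  - Real.Gamma (θ + 1) / (m * (b - a)) *
      (rlLeft θ (m * a) (m * x) f + rlRight θ (m * x) (m * b) f)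

/-- `(α,m)`-convexity of `g` on the interval `[c,d]`. -/
def AlphaMConvexOn (α m c d : ℝ) (g : ℝ → ℝ) : Prop :=
  ∀ u ∈ Set.Icc c d, ∀ v ∈ Set.Icc c d, ∀ t ∈ Set.Icc (0:ℝ) 1,
    t * u + m * (1 - t) * v ∈ Set.Icc c d →
      g (t * u + m * (1 - t) * v) ≤ t ^ α * g u + m * (1 - t ^ α) * g v

noncomputable def A1 (θ lam : ℝ) : ℝ := (2 * θ * lam ^ (1 + 1 / θ) + 1) / (θ + 1) - lam

noncomputable def A2 (α θ lam : ℝ) : ℝ :=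
  2 * θ * lam ^ (1 + (1 + α) / θ) / ((α + 1) * (α + θ + 1)) + 1 / (α + θ + 1) - lam / (α + 1)

noncomputable def A3 (α θ lam : ℝ) : ℝ := A1 θ lam - A2 α θ lam



lemma wcont {c θ : ℝ} (hθ : 0 < θ) : Continuous (fun t : ℝ => (t - c) ^ θ) := by
  rw [continuous_iff_continuousAt]
  intro t
  exact (Real.continuousAt_rpow_const _ _ (Or.inr hθ.le)).comp
    ((continuousAt_id).sub continuousAt_const)

lemma wint {c d θ : ℝ} (hθ : -1 < θ) : IntervalIntegrable (fun t : ℝ => (t - c) ^ θ) volume c d := by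
  have h := (intervalIntegral.intervalIntegrable_rpow' (a := 0) (b := d - c) hθ).comp_sub_right c
  simpa using h

lemma wint' {c d θ : ℝ} (hθ : -1 < θ) : IntervalIntegrable (fun t : ℝ => (d - t) ^ θ) volume c d := by
  have h := (intervalIntegral.intervalIntegrable_rpow' (a := 0) (b := d - c) hθ).comp_sub_left d
  simpa using h.symm

lemma ibp_left {f f' : ℝ → ℝ} {θ c d : ℝ} (hθ : 0 < θ) (hcd : c ≤ d)
    (hderiv : ∀ t ∈ Set.Icc c d, HasDerivAt f (f' t) t)
    (hi : IntervalIntegrable f' volume c d) :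
    ∫ t in c..d, (t - c) ^ (θ - 1) * f t
      = (d - c) ^ θ / θ * f d - (1 / θ) * ∫ t in c..d, (t - c) ^ θ * f' t := by
  have hfc : ContinuousOn f (Set.Icc c d) := fun t ht =>
    (hderiv t ht).continuousAt.continuousWithinAt
  have hucc : Set.uIcc c d = Set.Icc c d := Set.uIcc_of_le hcd
  have h1int : IntervalIntegrable (fun t => (t - c) ^ (θ - 1) * f t) volume c d :=
    (wint (by linarith)).mul_continuousOn (hucc ▸ hfc)
  have h2int : IntervalIntegrable (fun t => (t - c) ^ θ * f' t) volume c d :=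
    hi.continuousOn_mul (hucc ▸ (wcont hθ).continuousOn)
  have h2int' : IntervalIntegrable (fun t => (t - c) ^ θ / θ * f' t) volume c d := by
    have := h2int.div_const θ
    simpa [div_mul_eq_mul_div, mul_div_assoc] using this
  have key : ∫ t in c..d, ((t - c) ^ (θ - 1) * f t + (t - c) ^ θ / θ * f' t)
      = (d - c) ^ θ / θ * f d - 0 := by
    have hF : ContinuousOn (fun t => (t - c) ^ θ / θ * f t) (Set.Icc c d) :=
      (((wcont hθ).continuousOn).div_const θ).mul hfc
    have hFd : ∀ t ∈ Set.Ioo c d, HasDerivWithinAt (fun t => (t - c) ^ θ / θ * f t)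
        ((t - c) ^ (θ - 1) * f t + (t - c) ^ θ / θ * f' t) (Set.Ioi t) t := by
      intro t ht
      have h0 : t - c ≠ 0 := ne_of_gt (sub_pos.2 ht.1)
      have hw : HasDerivAt (fun t : ℝ => (t - c) ^ θ) (θ * (t - c) ^ (θ - 1)) t := by
        have h1 := Real.hasDerivAt_rpow_const (x := t - c) (p := θ) (Or.inl h0)
        have h2 : HasDerivAt (fun t : ℝ => t - c) 1 t := (hasDerivAt_id t).sub_const c
        have h3 := h1.comp t h2
        rw [mul_one] at h3
        exact h3
      have := ((hw.div_const θ).mul (hderiv t (Set.Ioo_subset_Icc_self ht)))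
      have heq : θ * (t - c) ^ (θ - 1) / θ * f t + (t - c) ^ θ / θ * f' t
          = (t - c) ^ (θ - 1) * f t + (t - c) ^ θ / θ * f' t := by
        field_simp
      exact (heq ▸ this).hasDerivWithinAt
    have := intervalIntegral.integral_eq_sub_of_hasDeriv_right_of_le hcd hF hFd
      (h1int.add h2int')
    rw [this]
    simp [Real.zero_rpow hθ.ne']
  rw [intervalIntegral.integral_add h1int h2int'] at key
  have : ∫ t in c..d, (t - c) ^ θ / θ * f' t = (1/θ) * ∫ t in c..d, (t - c) ^ θ * f' t := by
    rw [← intervalIntegral.integral_const_mul]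
    congr 1; ext t; ring
  rw [this] at key
  linarith

lemma ibp_right {f f' : ℝ → ℝ} {θ c d : ℝ} (hθ : 0 < θ) (hcd : c ≤ d)
    (hderiv : ∀ t ∈ Set.Icc c d, HasDerivAt f (f' t) t)
    (hi : IntervalIntegrable f' volume c d) :
    ∫ t in c..d, (d - t) ^ (θ - 1) * f t
      = (d - c) ^ θ / θ * f c + (1 / θ) * ∫ t in c..d, (d - t) ^ θ * f' t := by
  have hfc : ContinuousOn f (Set.Icc c d) := fun t ht =>
    (hderiv t ht).continuousAt.continuousWithinAt
  have hucc : Set.uIcc c d = Set.Icc c d := Set.uIcc_of_le hcd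
  have hwc : Continuous (fun t : ℝ => (d - t) ^ θ) := by
    rw [continuous_iff_continuousAt]
    intro t
    exact (Real.continuousAt_rpow_const _ _ (Or.inr hθ.le)).comp
      (continuousAt_const.sub continuousAt_id)
  have h1int : IntervalIntegrable (fun t => (d - t) ^ (θ - 1) * f t) volume c d :=
    (wint' (by linarith)).mul_continuousOn (hucc ▸ hfc)
  have h2int : IntervalIntegrable (fun t => (d - t) ^ θ * f' t) volume c d :=
    hi.continuousOn_mul (hucc ▸ hwc.continuousOn)
  have h2int' : IntervalIntegrable (fun t => -((d - t) ^ θ / θ) * f' t) volume c d := by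
    have := h2int.div_const (-θ)
    simpa [div_mul_eq_mul_div, mul_div_assoc, neg_div, div_neg] using this
  have key : ∫ t in c..d, ((d - t) ^ (θ - 1) * f t + -((d - t) ^ θ / θ) * f' t)
      = 0 - (-((d - c) ^ θ / θ) * f c) := by
    have hF : ContinuousOn (fun t => -((d - t) ^ θ / θ) * f t) (Set.Icc c d) :=
      ((hwc.continuousOn.div_const θ).neg).mul hfc
    have hFd : ∀ t ∈ Set.Ioo c d, HasDerivWithinAt (fun t => -((d - t) ^ θ / θ) * f t)
        ((d - t) ^ (θ - 1) * f t + -((d - t) ^ θ / θ) * f' t) (Set.Ioi t) t := by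
      intro t ht
      have h0 : d - t ≠ 0 := ne_of_gt (sub_pos.2 ht.2)
      have hw : HasDerivAt (fun t : ℝ => (d - t) ^ θ) (θ * (d - t) ^ (θ - 1) * (-1)) t := by
        have h1 := Real.hasDerivAt_rpow_const (x := d - t) (p := θ) (Or.inl h0)
        have h2 : HasDerivAt (fun t : ℝ => d - t) (-1) t := (hasDerivAt_id t).const_sub d
        exact h1.comp t h2
      have := (((hw.div_const θ).neg).mul (hderiv t (Set.Ioo_subset_Icc_self ht)))
      have heq : -(θ * (d - t) ^ (θ - 1) * (-1) / θ) * f t + -((d - t) ^ θ / θ) * f' t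
          = (d - t) ^ (θ - 1) * f t + -((d - t) ^ θ / θ) * f' t := by
        field_simp
      exact (heq ▸ this).hasDerivWithinAt
    have := intervalIntegral.integral_eq_sub_of_hasDeriv_right_of_le hcd hF hFd
      (h1int.add h2int')
    rw [this]
    simp [Real.zero_rpow hθ.ne']
  rw [intervalIntegral.integral_add h1int h2int'] at key
  have : ∫ t in c..d, -((d - t) ^ θ / θ) * f' t = -((1/θ) * ∫ t in c..d, (d - t) ^ θ * f' t) := by
    rw [← intervalIntegral.integral_const_mul, ← intervalIntegral.integral_neg]
    congr 1; ext t; ring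
  rw [this] at key
  linarith

lemma int_rpow_left {r c d : ℝ} (hr : -1 < r) :
    ∫ t in c..d, (t - c) ^ r = (d - c) ^ (r + 1) / (r + 1) := by
  have h := intervalIntegral.integral_comp_sub_right (a := c) (b := d) (fun s => s ^ r) c
  rw [h, sub_self, integral_rpow (Or.inl hr), Real.zero_rpow (by linarith), sub_zero]

lemma int_rpow_right {r c d : ℝ} (hr : -1 < r) :
    ∫ t in c..d, (d - t) ^ r = (d - c) ^ (r + 1) / (r + 1) := by
  have h := intervalIntegral.integral_comp_sub_left (a := c) (b := d) (fun s => s ^ r) d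
  rw [h, sub_self, intervalIntegral.integral_symm, integral_rpow (Or.inl hr),
    Real.zero_rpow (by linarith)]
  ring


lemma holder_step {w g : ℝ → ℝ} {p q c d : ℝ} (hcd : c ≤ d) (hpq : p.HolderConjugate q)
    (hw : ContinuousOn w (Set.Icc c d)) (hw0 : ∀ t ∈ Set.Ioc c d, 0 ≤ w t)
    (hg : AEStronglyMeasurable g (volume.restrict (Set.Ioc c d)))
    {M : ℝ} (hM : ∀ t ∈ Set.Ioc c d, |g t| ≤ M) :
    ∫ t in c..d, w t * |g t|
      ≤ (∫ t in c..d, w t ^ p) ^ (1/p) * (∫ t in c..d, |g t| ^ q) ^ (1/q) := by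
  set μ := volume.restrict (Set.Ioc c d) with hμ
  haveI : IsFiniteMeasure μ := by
    constructor
    rw [hμ, Measure.restrict_apply_univ, Real.volume_Ioc]
    exact ENNReal.ofReal_lt_top
  obtain ⟨C, hC⟩ := (isCompact_Icc (a := c) (b := d)).exists_bound_of_continuousOn hw
  have hwm : AEStronglyMeasurable w μ :=
    (hw.mono Set.Ioc_subset_Icc_self).aestronglyMeasurable measurableSet_Ioc
  have hwLp : MemLp w (ENNReal.ofReal p) μ := by
    refine MemLp.of_bound hwm C ?_
    refine (ae_restrict_iff' measurableSet_Ioc).2 (ae_of_all _ fun t ht => ?_)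
    exact hC t (Set.Ioc_subset_Icc_self ht)
  have hgm : AEStronglyMeasurable (fun t => |g t|) μ := hg.norm.congr (by
    filter_upwards with t using (Real.norm_eq_abs _))
  have hgLq : MemLp (fun t => |g t|) (ENNReal.ofReal q) μ := by
    refine MemLp.of_bound hgm M ?_
    refine (ae_restrict_iff' measurableSet_Ioc).2 (ae_of_all _ fun t ht => ?_)
    simpa [abs_abs] using hM t ht
  have h := MeasureTheory.integral_mul_le_Lp_mul_Lq_of_nonneg hpq
    (f := w) (g := fun t => |g t|)
    ((ae_restrict_iff' measurableSet_Ioc).2 (ae_of_all _ hw0))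
    (ae_of_all _ fun t => abs_nonneg _) hwLp hgLq
  rw [intervalIntegral.integral_of_le hcd, intervalIntegral.integral_of_le hcd,
    intervalIntegral.integral_of_le hcd]
  exact h


-- weight integrability and value for  w t = ((t-c)/(d-c))^α
lemma wa_cont {c d α : ℝ} (hα : 0 ≤ α) : Continuous (fun t : ℝ => ((t - c)/(d - c)) ^ α) := by
  rw [continuous_iff_continuousAt]
  intro t
  exact (Real.continuousAt_rpow_const _ _ (Or.inr hα)).comp
    (((continuousAt_id).sub continuousAt_const).div_const _)

lemma wa_cont' {c d α : ℝ} (hα : 0 ≤ α) : Continuous (fun t : ℝ => ((d - t)/(d - c)) ^ α) := by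
  rw [continuous_iff_continuousAt]
  intro t
  exact (Real.continuousAt_rpow_const _ _ (Or.inr hα)).comp
    ((continuousAt_const.sub continuousAt_id).div_const _)

lemma wa_int {c d α : ℝ} (hα : 0 ≤ α) (hcd : c < d) :
    ∫ t in c..d, ((t - c)/(d - c)) ^ α = (d - c) / (α + 1) := by
  have hpos : (0:ℝ) < d - c := sub_pos.2 hcd
  have hcongr : ∫ t in c..d, ((t - c)/(d - c)) ^ α
      = ∫ t in c..d, (t - c) ^ α / (d - c) ^ α := by
    apply intervalIntegral.integral_congr
    intro t ht
    rw [Set.uIcc_of_le hcd.le] at ht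
    exact Real.div_rpow (sub_nonneg.2 ht.1) hpos.le α
  rw [hcongr]
  rw [intervalIntegral.integral_div, int_rpow_left (by linarith)]
  rw [Real.rpow_add_one hpos.ne' α]
  field_simp [Real.rpow_natCast]

lemma wa_int' {c d α : ℝ} (hα : 0 ≤ α) (hcd : c < d) :
    ∫ t in c..d, ((d - t)/(d - c)) ^ α = (d - c) / (α + 1) := by
  have h1 := intervalIntegral.integral_comp_sub_left (a := c) (b := d)
    (fun s => (s/(d - c)) ^ α) d
  have h2 := intervalIntegral.integral_comp_sub_right (a := c) (b := d)
    (fun s => (s/(d - c)) ^ α) c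
  rw [sub_self] at h1 h2
  calc ∫ t in c..d, ((d - t)/(d - c)) ^ α = ∫ t in (0:ℝ)..(d - c), (t/(d-c)) ^ α := h1
    _ = ∫ t in c..d, ((t - c)/(d - c)) ^ α := h2.symm
    _ = (d - c) / (α + 1) := wa_int hα hcd

lemma conv_int_bound {g w : ℝ → ℝ} {c d A B m α : ℝ} (hcd : c < d) (hm : 0 < m)
    (hα : 0 ≤ α) (hB : 0 ≤ B)
    (hgi : IntervalIntegrable g volume c d)
    (hwi : IntervalIntegrable w volume c d)
    (hwint : ∫ t in c..d, w t = (d - c)/(α + 1))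
    (hbound : ∀ t ∈ Set.Icc c d, g t ≤ w t * A + m * (1 - w t) * B) :
    ∫ t in c..d, g t ≤ (d - c) * ((A + α * m * B)/(α + 1)) := by
  have hbi : IntervalIntegrable (fun t => w t * A + m * (1 - w t) * B) volume c d := by
    have : (fun t => w t * A + m * (1 - w t) * B)
        = fun t => (A - m * B) * w t + m * B := by ext t; ring
    rw [this]
    exact ((hwi.const_mul _).add (intervalIntegrable_const))
  have hmono := intervalIntegral.integral_mono_on hcd.le hgi hbi hbound
  have : ∫ t in c..d, (w t * A + m * (1 - w t) * B)
      = (A - m * B) * ((d - c)/(α + 1)) + m * B * (d - c) := by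
    have heq : (fun t => w t * A + m * (1 - w t) * B)
        = fun t => (A - m * B) * w t + m * B := by ext t; ring
    rw [heq, intervalIntegral.integral_add ((hwi.const_mul _)) intervalIntegrable_const,
      intervalIntegral.integral_const_mul, hwint, intervalIntegral.integral_const, smul_eq_mul]
    ring
  rw [this] at hmono
  have heq2 : (A - m * B) * ((d - c)/(α + 1)) + m * B * (d - c)
      = (d - c) * ((A + α * m * B)/(α + 1)) := by
    have : α + 1 ≠ 0 := by linarith
    field_simp
    ring
  linarith

lemma wcont' {c θ : ℝ} (hθ : 0 < θ) : Continuous (fun t : ℝ => (c - t) ^ θ) := by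
  rw [continuous_iff_continuousAt]
  intro t
  exact (Real.continuousAt_rpow_const _ _ (Or.inr hθ.le)).comp
    (continuousAt_const.sub continuousAt_id)

lemma bdd_integrableOn {g : ℝ → ℝ} {c d M : ℝ}
    (hg : AEStronglyMeasurable g (volume.restrict (Set.Ioc c d)))
    (hM : ∀ t ∈ Set.Ioc c d, ‖g t‖ ≤ M) : IntegrableOn g (Set.Ioc c d) volume := by
  haveI : IsFiniteMeasure (volume.restrict (Set.Ioc c d)) := by
    constructor
    rw [Measure.restrict_apply_univ, Real.volume_Ioc]
    exact ENNReal.ofReal_lt_top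
  exact memLp_one_iff_integrable.1 (MemLp.of_bound hg M
    ((ae_restrict_iff' measurableSet_Ioc).2 (ae_of_all _ hM)))

set_option maxHeartbeats 1000000 in
theorem midpoint_holder
    (I : Set ℝ) (hI : Set.OrdConnected I) (hI0 : I ⊆ Set.Ici (0:ℝ)) (f f' : ℝ → ℝ) (m a b : ℝ)
    (hm : m ∈ Set.Ioc (0:ℝ) 1) (hab : a < b)
    (hma : m * a ∈ interior I) (hb : b ∈ interior I)
    (hf : ∀ y ∈ interior I, HasDerivAt f (f' y) y)
    (hint : IntervalIntegrable f' MeasureTheory.volume (m * a) (m * b))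
    (α q : ℝ) (hα : α ∈ Set.Icc (0:ℝ) 1) (hq : 1 < q)
    (hconv : AlphaMConvexOn α m (m * a) b (fun u => |f' u| ^ q)) :
    ∀ θ : ℝ, 0 < θ →
      |f (m * (a + b) / 2) -
          Real.Gamma (θ + 1) * 2 ^ (θ - 1) / (m ^ θ * (b - a) ^ θ) *
            (rlLeft θ (m * a) (m * (a + b) / 2) f + rlRight θ (m * (a + b) / 2) (m * b) f)| ≤
        m * (b - a) / 4 * (1 / (θ * (q / (q - 1)) + 1)) ^ (1 / (q / (q - 1))) *
          (((|f' (m * (a + b) / 2)| ^ q + α * m * |f' a| ^ q) / (α + 1)) ^ (1 / q) +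
            ((|f' (m * (a + b) / 2)| ^ q + α * m * |f' b| ^ q) / (α + 1)) ^ (1 / q)) := by
  obtain ⟨hm0, hm1⟩ := hm
  obtain ⟨hα0, hα1⟩ := hα
  intro θ hθ
  have hq0 : (0:ℝ) < q := lt_trans one_pos hq
  have hq1 : (0:ℝ) < q - 1 := by linarith
  set p := q / (q - 1) with hp
  have hp1 : 1 < p := by rw [hp, lt_div_iff₀ hq1]; linarith
  have hppos : (0:ℝ) < p := lt_trans one_pos hp1
  have hpq : p.HolderConjugate q := Real.holderConjugate_iff.2 ⟨hp1, by rw [hp]; field_simp; ring⟩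
  have ha0 : 0 ≤ a := by
    have h1 : (0:ℝ) ≤ m * a := hI0 (interior_subset hma)
    by_contra hcon
    push_neg at hcon
    nlinarith
  have hb0 : 0 < b := lt_of_le_of_lt ha0 hab
  set c := m * a with hc
  set d := m * b with hd
  set e := m * (a + b) / 2 with he
  set r := m * (b - a) / 2 with hrdef
  have hr : 0 < r := by rw [hrdef]; apply div_pos (mul_pos hm0 (by linarith)); norm_num
  have hec : e - c = r := by rw [he, hc, hrdef]; ring
  have hde : d - e = r := by rw [hd, he, hrdef]; ring
  have hce : c < e := by have := hec ▸ hr; linarith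
  have hed : e < d := by have := hde ▸ hr; linarith
  have hcd : c ≤ d := by linarith
  have heb : e ≤ b := by rw [he]; nlinarith
  have hca : c ≤ a := by rw [hc]; nlinarith
  have hdb : d ≤ b := by rw [hd]; nlinarith
  have hsub : Set.Icc c b ⊆ interior I := hI.interior.out hma hb
  have hIcc : Set.Icc c d ⊆ interior I := fun t ht => hsub ⟨ht.1, le_trans ht.2 hdb⟩
  have hderiv : ∀ t ∈ Set.Icc c d, HasDerivAt f (f' t) t := fun t ht => hf t (hIcc ht)
  have hintL : IntervalIntegrable f' volume c e := by
    apply hint.mono_set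
    rw [Set.uIcc_of_le hce.le, Set.uIcc_of_le hcd]
    exact Set.Icc_subset_Icc_right hed.le
  have hintR : IntervalIntegrable f' volume e d := by
    apply hint.mono_set
    rw [Set.uIcc_of_le hed.le, Set.uIcc_of_le hcd]
    exact Set.Icc_subset_Icc_left hce.le
  set IL := ∫ t in c..e, (t - c) ^ θ * f' t with hILdef
  set IR := ∫ t in e..d, (d - t) ^ θ * f' t with hIRdef
  have hL := ibp_left hθ hce.le (fun t ht => hderiv t ⟨ht.1, le_trans ht.2 hed.le⟩) hintL
  have hR := ibp_right hθ hed.le (fun t ht => hderiv t ⟨le_trans hce.le ht.1, ht.2⟩) hintR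
  rw [hec] at hL
  rw [hde] at hR
  have hΓ := Real.Gamma_add_one hθ.ne'
  have hΓpos := Real.Gamma_pos_of_pos hθ
  have hmba : (0:ℝ) < m * (b - a) := mul_pos hm0 (by linarith)
  have hX : m ^ θ * (b - a) ^ θ = (m * (b - a)) ^ θ := (Real.mul_rpow hm0.le (by linarith)).symm
  have hXpos : 0 < (m * (b - a)) ^ θ := Real.rpow_pos_of_pos hmba θ
  have hTpos : 0 < (2:ℝ) ^ θ := Real.rpow_pos_of_pos two_pos θ
  have hrθ : r ^ θ = (m * (b - a)) ^ θ / 2 ^ θ := by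
    rw [hrdef]; exact Real.div_rpow hmba.le (by norm_num) θ
  have h2θ : (2:ℝ) ^ (θ - 1) = 2 ^ θ / 2 := by
    rw [Real.rpow_sub two_pos, Real.rpow_one]
  have hrθpos : 0 < r ^ θ := Real.rpow_pos_of_pos hr θ
  have hkey : f e - Real.Gamma (θ + 1) * 2 ^ (θ - 1) / (m ^ θ * (b - a) ^ θ) *
      (rlLeft θ c e f + rlRight θ e d f) = (IL - IR) / (2 * r ^ θ) := by
    simp only [rlLeft, rlRight]
    rw [hL, hR, hΓ, hX, h2θ, hrθ]
    field_simp
    ring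
  rw [hkey]
  -- notation
  set A := |f' e| ^ q with hA
  set Ba := |f' a| ^ q with hBa
  set Bb := |f' b| ^ q with hBb
  have hA0 : 0 ≤ A := Real.rpow_nonneg (abs_nonneg _) q
  have hBa0 : 0 ≤ Ba := Real.rpow_nonneg (abs_nonneg _) q
  have hBb0 : 0 ≤ Bb := Real.rpow_nonneg (abs_nonneg _) q
  have heIcc : e ∈ Set.Icc c b := ⟨hce.le, heb⟩
  have haIcc : a ∈ Set.Icc c b := ⟨hca, hab.le⟩
  have hbIcc : b ∈ Set.Icc c b := ⟨by linarith, le_refl b⟩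
  -- convexity bounds
  have hbndL : ∀ t ∈ Set.Icc c e, |f' t| ^ q
      ≤ ((t - c)/(e - c)) ^ α * A + m * (1 - ((t - c)/(e - c)) ^ α) * Ba := by
    intro t ht
    set s := (t - c)/(e - c) with hs
    have hene : e - c ≠ 0 := by rw [hec]; exact hr.ne'
    have hs0 : 0 ≤ s := div_nonneg (sub_nonneg.2 ht.1) (by rw [hec]; exact hr.le)
    have hs1 : s ≤ 1 := by
      rw [hs, div_le_one (by rw [hec]; exact hr)]
      linarith [ht.2]
    have hpt : s * e + m * (1 - s) * a = t := by
      have h1 : s * e + m * (1 - s) * a = s * (e - c) + c := by rw [hc]; ring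
      rw [h1, hs]
      field_simp
      ring
    have happ := hconv e heIcc a haIcc s ⟨hs0, hs1⟩
      (by rw [hpt]; exact ⟨ht.1, le_trans ht.2 heb⟩)
    rw [hpt] at happ
    simpa using happ
  have hbndR : ∀ t ∈ Set.Icc e d, |f' t| ^ q
      ≤ ((d - t)/(d - e)) ^ α * A + m * (1 - ((d - t)/(d - e)) ^ α) * Bb := by
    intro t ht
    set s := (d - t)/(d - e) with hs
    have hs0 : 0 ≤ s := div_nonneg (sub_nonneg.2 ht.2) (by rw [hde]; exact hr.le)
    have hs1 : s ≤ 1 := by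
      rw [hs, div_le_one (by rw [hde]; exact hr)]
      linarith [ht.1]
    have hpt : s * e + m * (1 - s) * b = t := by
      have h1 : s * e + m * (1 - s) * b = d - s * (d - e) := by rw [hd]; ring
      rw [h1, hs]
      have : d - e ≠ 0 := by rw [hde]; exact hr.ne'
      field_simp
      ring
    have happ := hconv e heIcc b hbIcc s ⟨hs0, hs1⟩
      (by rw [hpt]; exact ⟨le_trans hce.le ht.1, le_trans ht.2 hdb⟩)
    rw [hpt] at happ
    simpa using happ
  -- weight in [0,1]
  have hwaL01 : ∀ t ∈ Set.Icc c e, ((t - c)/(e - c)) ^ α ∈ Set.Icc (0:ℝ) 1 := by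
    intro t ht
    have h0 : 0 ≤ (t - c)/(e - c) := div_nonneg (sub_nonneg.2 ht.1) (by rw [hec]; exact hr.le)
    have h1 : (t - c)/(e - c) ≤ 1 := by
      rw [div_le_one (by rw [hec]; exact hr)]; linarith [ht.2]
    exact ⟨Real.rpow_nonneg h0 α, Real.rpow_le_one h0 h1 hα0⟩
  have hwaR01 : ∀ t ∈ Set.Icc e d, ((d - t)/(d - e)) ^ α ∈ Set.Icc (0:ℝ) 1 := by
    intro t ht
    have h0 : 0 ≤ (d - t)/(d - e) := div_nonneg (sub_nonneg.2 ht.2) (by rw [hde]; exact hr.le)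
    have h1 : (d - t)/(d - e) ≤ 1 := by
      rw [div_le_one (by rw [hde]; exact hr)]; linarith [ht.1]
    exact ⟨Real.rpow_nonneg h0 α, Real.rpow_le_one h0 h1 hα0⟩
  -- crude bounds
  have hcrudeL : ∀ t ∈ Set.Icc c e, |f' t| ^ q ≤ A + m * Ba := by
    intro t ht
    have h1 := hbndL t ht
    obtain ⟨hw0, hw1⟩ := hwaL01 t ht
    refine le_trans h1 (add_le_add ?_ ?_)
    · simpa using mul_le_mul_of_nonneg_right hw1 hA0
    · rw [mul_assoc]
      refine mul_le_mul_of_nonneg_left ?_ hm0.le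
      simpa using mul_le_mul_of_nonneg_right (sub_le_self 1 hw0) hBa0
  have hcrudeR : ∀ t ∈ Set.Icc e d, |f' t| ^ q ≤ A + m * Bb := by
    intro t ht
    have h1 := hbndR t ht
    obtain ⟨hw0, hw1⟩ := hwaR01 t ht
    refine le_trans h1 (add_le_add ?_ ?_)
    · simpa using mul_le_mul_of_nonneg_right hw1 hA0
    · rw [mul_assoc]
      refine mul_le_mul_of_nonneg_left ?_ hm0.le
      simpa using mul_le_mul_of_nonneg_right (sub_le_self 1 hw0) hBb0
  -- measurability
  have hmeasL : AEStronglyMeasurable f' (volume.restrict (Set.Ioc c e)) :=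
    hintL.1.aestronglyMeasurable
  have hmeasR : AEStronglyMeasurable f' (volume.restrict (Set.Ioc e d)) :=
    hintR.1.aestronglyMeasurable
  have habsq_cont : Continuous (fun x : ℝ => |x| ^ q) :=
    (Real.continuous_rpow_const hq0.le).comp continuous_abs
  have hGmL : AEStronglyMeasurable (fun t => |f' t| ^ q) (volume.restrict (Set.Ioc c e)) :=
    (habsq_cont.measurable.comp_aemeasurable hmeasL.aemeasurable).aestronglyMeasurable
  have hGmR : AEStronglyMeasurable (fun t => |f' t| ^ q) (volume.restrict (Set.Ioc e d)) :=
    (habsq_cont.measurable.comp_aemeasurable hmeasR.aemeasurable).aestronglyMeasurable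
  -- integrability of |f'|^q
  have hGiL : IntervalIntegrable (fun t => |f' t| ^ q) volume c e := by
    rw [intervalIntegrable_iff_integrableOn_Ioc_of_le hce.le]
    refine bdd_integrableOn hGmL (M := A + m * Ba) fun t ht => ?_
    rw [Real.norm_eq_abs, abs_of_nonneg (Real.rpow_nonneg (abs_nonneg _) q)]
    exact hcrudeL t (Set.Ioc_subset_Icc_self ht)
  have hGiR : IntervalIntegrable (fun t => |f' t| ^ q) volume e d := by
    rw [intervalIntegrable_iff_integrableOn_Ioc_of_le hed.le]
    refine bdd_integrableOn hGmR (M := A + m * Bb) fun t ht => ?_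
    rw [Real.norm_eq_abs, abs_of_nonneg (Real.rpow_nonneg (abs_nonneg _) q)]
    exact hcrudeR t (Set.Ioc_subset_Icc_self ht)
  -- integral convexity bounds
  have hconvIL : ∫ t in c..e, |f' t| ^ q ≤ r * ((A + α * m * Ba)/(α + 1)) := by
    have h := conv_int_bound hce hm0 hα0 hBa0 hGiL
      ((wa_cont hα0).intervalIntegrable c e) (wa_int hα0 hce) hbndL
    rwa [hec] at h
  have hconvIR : ∫ t in e..d, |f' t| ^ q ≤ r * ((A + α * m * Bb)/(α + 1)) := by
    have h := conv_int_bound hed hm0 hα0 hBb0 hGiR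
      ((wa_cont' hα0).intervalIntegrable e d) (wa_int' hα0 hed) hbndR
    rwa [hde] at h
  -- pointwise bound on |f'| for holder
  have habs_of_q : ∀ t C, 0 ≤ C → |f' t| ^ q ≤ C → |f' t| ≤ C ^ (1/q) := by
    intro t C hC hle
    calc |f' t| = (|f' t| ^ q) ^ (1/q) := by
          rw [← Real.rpow_mul (abs_nonneg _), mul_one_div_cancel hq0.ne', Real.rpow_one]
      _ ≤ C ^ (1/q) := Real.rpow_le_rpow (Real.rpow_nonneg (abs_nonneg _) q) hle (by positivity)
  -- Hölder
  have hHL : ∫ t in c..e, (t - c) ^ θ * |f' t|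
      ≤ (∫ t in c..e, ((t - c) ^ θ) ^ p) ^ (1/p) * (∫ t in c..e, |f' t| ^ q) ^ (1/q) :=
    holder_step hce.le hpq ((wcont hθ).continuousOn)
      (fun t ht => Real.rpow_nonneg (sub_nonneg.2 ht.1.le) θ) hmeasL
      (M := (A + m * Ba) ^ (1/q))
      (fun t ht => habs_of_q t _ (by positivity) (hcrudeL t (Set.Ioc_subset_Icc_self ht)))
  have hHR : ∫ t in e..d, (d - t) ^ θ * |f' t|
      ≤ (∫ t in e..d, ((d - t) ^ θ) ^ p) ^ (1/p) * (∫ t in e..d, |f' t| ^ q) ^ (1/q) :=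
    holder_step hed.le hpq ((wcont' hθ).continuousOn)
      (fun t ht => Real.rpow_nonneg (sub_nonneg.2 ht.2) θ) hmeasR
      (M := (A + m * Bb) ^ (1/q))
      (fun t ht => habs_of_q t _ (by positivity) (hcrudeR t (Set.Ioc_subset_Icc_self ht)))
  -- weight p-integrals
  have hθp : (0:ℝ) < θ * p := mul_pos hθ hppos
  have hVL : ∫ t in c..e, ((t - c) ^ θ) ^ p = r ^ (θ * p + 1) / (θ * p + 1) := by
    have h1 : ∫ t in c..e, ((t - c) ^ θ) ^ p = ∫ t in c..e, (t - c) ^ (θ * p) := by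
      apply intervalIntegral.integral_congr
      intro t ht
      rw [Set.uIcc_of_le hce.le] at ht
      exact (Real.rpow_mul (sub_nonneg.2 ht.1) θ p).symm
    rw [h1, int_rpow_left (by linarith), hec]
  have hVR : ∫ t in e..d, ((d - t) ^ θ) ^ p = r ^ (θ * p + 1) / (θ * p + 1) := by
    have h1 : ∫ t in e..d, ((d - t) ^ θ) ^ p = ∫ t in e..d, (d - t) ^ (θ * p) := by
      apply intervalIntegral.integral_congr
      intro t ht
      rw [Set.uIcc_of_le hed.le] at ht
      exact (Real.rpow_mul (sub_nonneg.2 ht.2) θ p).symm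
    rw [h1, int_rpow_right (by linarith), hde]
  -- abs into integrals
  have habsL : |IL| ≤ ∫ t in c..e, (t - c) ^ θ * |f' t| := by
    refine le_trans (intervalIntegral.abs_integral_le_integral_abs hce.le) (le_of_eq ?_)
    apply intervalIntegral.integral_congr
    intro t ht
    rw [Set.uIcc_of_le hce.le] at ht
    show |(t - c) ^ θ * f' t| = (t - c) ^ θ * |f' t|
    rw [abs_mul, abs_of_nonneg (Real.rpow_nonneg (sub_nonneg.2 ht.1) θ)]
  have habsR : |IR| ≤ ∫ t in e..d, (d - t) ^ θ * |f' t| := by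
    refine le_trans (intervalIntegral.abs_integral_le_integral_abs hed.le) (le_of_eq ?_)
    apply intervalIntegral.integral_congr
    intro t ht
    rw [Set.uIcc_of_le hed.le] at ht
    show |(d - t) ^ θ * f' t| = (d - t) ^ θ * |f' t|
    rw [abs_mul, abs_of_nonneg (Real.rpow_nonneg (sub_nonneg.2 ht.2) θ)]
  -- scalar computation
  set P := (1 / (θ * p + 1)) ^ (1/p) with hP
  have hθp1 : (0:ℝ) < θ * p + 1 := by linarith
  have hP0 : 0 ≤ P := Real.rpow_nonneg (by positivity) _
  have hexp : (θ * p + 1) * (1/p) + 1/q = θ + 1 := by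
    have h2 : 1/p + 1/q = 1 := by rw [one_div, one_div]; exact hpq.inv_add_inv_eq_one
    have h3 : (θ * p + 1) * (1/p) = θ + 1/p := by
      field_simp
    rw [h3, add_assoc, h2]
  have hscalar : ∀ C : ℝ, 0 ≤ C →
      (r ^ (θ * p + 1) / (θ * p + 1)) ^ (1/p) * (r * C) ^ (1/q)
        = r ^ (θ + 1) * P * C ^ (1/q) := by
    intro C hC
    have e1 : (r ^ (θ * p + 1) / (θ * p + 1)) ^ (1/p)
        = r ^ ((θ * p + 1) * (1/p)) * (1 / (θ * p + 1)) ^ (1/p) := by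
      rw [Real.div_rpow (Real.rpow_nonneg hr.le _) hθp1.le, ← Real.rpow_mul hr.le,
        Real.div_rpow zero_le_one hθp1.le, Real.one_rpow]
      ring
    have e2 : (r * C) ^ (1/q) = r ^ (1/q) * C ^ (1/q) := Real.mul_rpow hr.le hC
    have e3 : r ^ ((θ * p + 1) * (1/p)) * r ^ (1/q) = r ^ (θ + 1) := by
      rw [← Real.rpow_add hr, hexp]
    rw [e1, e2, hP, ← e3]
    ring
  -- block bounds
  have hintnnL : 0 ≤ ∫ t in c..e, |f' t| ^ q :=
    intervalIntegral.integral_nonneg hce.le fun t _ => Real.rpow_nonneg (abs_nonneg _) q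
  have hintnnR : 0 ≤ ∫ t in e..d, |f' t| ^ q :=
    intervalIntegral.integral_nonneg hed.le fun t _ => Real.rpow_nonneg (abs_nonneg _) q
  have hCa0 : 0 ≤ (A + α * m * Ba)/(α + 1) := by positivity
  have hCb0 : 0 ≤ (A + α * m * Bb)/(α + 1) := by positivity
  have hblockL : |IL| ≤ r ^ (θ + 1) * P * ((A + α * m * Ba)/(α + 1)) ^ (1/q) := by
    calc |IL| ≤ ∫ t in c..e, (t - c) ^ θ * |f' t| := habsL
      _ ≤ (∫ t in c..e, ((t - c) ^ θ) ^ p) ^ (1/p) * (∫ t in c..e, |f' t| ^ q) ^ (1/q) := hHL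
      _ ≤ (r ^ (θ * p + 1) / (θ * p + 1)) ^ (1/p) * (r * ((A + α * m * Ba)/(α + 1))) ^ (1/q) := by
          rw [hVL]
          exact mul_le_mul_of_nonneg_left
            (Real.rpow_le_rpow hintnnL hconvIL (by positivity))
            (Real.rpow_nonneg (by positivity) _)
      _ = r ^ (θ + 1) * P * ((A + α * m * Ba)/(α + 1)) ^ (1/q) := hscalar _ hCa0
  have hblockR : |IR| ≤ r ^ (θ + 1) * P * ((A + α * m * Bb)/(α + 1)) ^ (1/q) := by
    calc |IR| ≤ ∫ t in e..d, (d - t) ^ θ * |f' t| := habsR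
      _ ≤ (∫ t in e..d, ((d - t) ^ θ) ^ p) ^ (1/p) * (∫ t in e..d, |f' t| ^ q) ^ (1/q) := hHR
      _ ≤ (r ^ (θ * p + 1) / (θ * p + 1)) ^ (1/p) * (r * ((A + α * m * Bb)/(α + 1))) ^ (1/q) := by
          rw [hVR]
          exact mul_le_mul_of_nonneg_left
            (Real.rpow_le_rpow hintnnR hconvIR (by positivity))
            (Real.rpow_nonneg (by positivity) _)
      _ = r ^ (θ + 1) * P * ((A + α * m * Bb)/(α + 1)) ^ (1/q) := hscalar _ hCb0
  -- final assembly
  have h2r : (0:ℝ) < 2 * r ^ θ := by positivity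
  calc |(IL - IR) / (2 * r ^ θ)| = |IL - IR| / (2 * r ^ θ) := by
        rw [abs_div, abs_of_pos h2r]
    _ ≤ (|IL| + |IR|) / (2 * r ^ θ) :=
        div_le_div_of_nonneg_right (abs_sub IL IR) h2r.le
    _ ≤ (r ^ (θ + 1) * P * ((A + α * m * Ba)/(α + 1)) ^ (1/q)
          + r ^ (θ + 1) * P * ((A + α * m * Bb)/(α + 1)) ^ (1/q)) / (2 * r ^ θ) :=
        div_le_div_of_nonneg_right (add_le_add hblockL hblockR) h2r.le
    _ = m * (b - a) / 4 * P * (((A + α * m * Ba)/(α + 1)) ^ (1/q)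
          + ((A + α * m * Bb)/(α + 1)) ^ (1/q)) := by
        rw [Real.rpow_add_one hr.ne' θ]
        have h4 : m * (b - a) / 4 = r / 2 := by rw [hrdef]; ring
        rw [h4]
        field_simp
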